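/- Let v₁=(1,1,1), v₂=(1,−1,−1), v₃=(1,1,−1), v₄=(1,−1,1) in ℝ³ and for i ∈ [k]⁴ define P(i) = k³·i(1)·v₁ + k²·i(2)·v₂ + k·i(3)·v₃ + i(4)·v₄. Then for distinct i, i' ∈ [k]⁴, if r is the smallest index where they differ and i(r) > i'(r), the coordinatewise sign vector of P(i) − P(i') equals v_r. -/
import Mathlib

set_option maxHeartbeats 1000000

/-- The LEX property of the points `P(i)`. With
`v₁=(1,1,1), v₂=(1,−1,−1), v₃=(1,1,−1), v₄=(1,−1,1)` and
`P(i) = k³ i(1) v₁ + k² i(2) v₂ + k i(3) v₃ + i(4) v₄`, for distinct `i, i' ∈ [k]⁴`,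
if `r` is the smallest index where they differ and `i(r) > i'(r)`, then
`sg(P(i) − P(i')) = v_r`. -/
theorem lex_property (k : ℕ) (hk : 2 ≤ k)
    (v : Fin 4 → Fin 3 → ℝ)
    (hv : v = ![![1, 1, 1], ![1, -1, -1], ![1, 1, -1], ![1, -1, 1]])
    (P : (Fin 4 → ℕ) → Fin 3 → ℝ)
    (hP : ∀ i j, P i j = (k : ℝ) ^ 3 * (i 0 : ℝ) * v 0 j + (k : ℝ) ^ 2 * (i 1 : ℝ) * v 1 j
      + (k : ℝ) * (i 2 : ℝ) * v 2 j + (i 3 : ℝ) * v 3 j)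
    (sg : ℝ → ℝ)
    (hsg : ∀ x : ℝ, sg x = if 0 < x then 1 else if x < 0 then -1 else 0) :
    ∀ i i' : Fin 4 → ℕ,
      (∀ j, 1 ≤ i j ∧ i j ≤ k) → (∀ j, 1 ≤ i' j ∧ i' j ≤ k) →
      ∀ r : Fin 4, i' r < i r → (∀ s : Fin 4, s < r → i s = i' s) →
      ∀ j : Fin 3, sg (P i j - P i' j) = v r j := by
  intro i i' hi hi' r hr hpre j
  have hk' : (2 : ℝ) ≤ (k : ℝ) := by exact_mod_cast hk
  have hb : ∀ s : Fin 4, -((k:ℝ) - 1) ≤ (i s : ℝ) - (i' s : ℝ) ∧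
      (i s : ℝ) - (i' s : ℝ) ≤ (k:ℝ) - 1 := by
    intro s
    have h1 := (hi s).1; have h2 := (hi s).2
    have h3 := (hi' s).1; have h4 := (hi' s).2
    have c1 : (1:ℝ) ≤ (i s : ℝ) := by exact_mod_cast h1
    have c2 : (i s : ℝ) ≤ (k:ℝ) := by exact_mod_cast h2
    have c3 : (1:ℝ) ≤ (i' s : ℝ) := by exact_mod_cast h3
    have c4 : (i' s : ℝ) ≤ (k:ℝ) := by exact_mod_cast h4
    constructor <;> linarith
  have hrpos : (1:ℝ) ≤ (i r : ℝ) - (i' r : ℝ) := by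
    have h1 : i' r + 1 ≤ i r := hr
    have h2 := (Nat.cast_le (α := ℝ)).2 h1
    push_cast at h2
    linarith
  have key : ∀ x : ℝ, (0 < x → sg x = 1) ∧ (x < 0 → sg x = -1) := by
    intro x
    rw [hsg]
    constructor
    · intro h; rw [if_pos h]
    · intro h; rw [if_neg (by linarith), if_pos h]
  have hD : ∀ j, P i j - P i' j =
      (k : ℝ) ^ 3 * ((i 0 : ℝ) - (i' 0 : ℝ)) * v 0 j
      + (k : ℝ) ^ 2 * ((i 1 : ℝ) - (i' 1 : ℝ)) * v 1 j
      + (k : ℝ) * ((i 2 : ℝ) - (i' 2 : ℝ)) * v 2 j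
      + ((i 3 : ℝ) - (i' 3 : ℝ)) * v 3 j := by
    intro j; rw [hP, hP]; ring
  have hK0 : (0:ℝ) ≤ (k:ℝ) := by linarith
  have hK2 : (0:ℝ) ≤ (k:ℝ)^2 := by positivity
  have hK3 : (0:ℝ) ≤ (k:ℝ)^3 := by positivity
  have d3l := (hb 3).1; have d3u := (hb 3).2
  have U2 := mul_le_mul_of_nonneg_left (hb 2).2 hK0
  have L2 := mul_le_mul_of_nonneg_left (hb 2).1 hK0
  have U1 := mul_le_mul_of_nonneg_left (hb 1).2 hK2
  have L1 := mul_le_mul_of_nonneg_left (hb 1).1 hK2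
  fin_cases r
  · have hr0 : (1:ℝ) ≤ (i 0 : ℝ) - (i' 0 : ℝ) := hrpos
    have Lead := mul_le_mul_of_nonneg_left hr0 hK3
    fin_cases j <;>
    · simp only [hD]; simp [hv, Matrix.vecHead, Matrix.vecTail]
      first
      | (rw [(key _).1] <;> linarith [Lead, U1, L1, U2, L2, d3l, d3u, hk'])
      | (rw [(key _).2] <;> linarith [Lead, U1, L1, U2, L2, d3l, d3u, hk'])
  · have e0 : (k:ℝ)^3 * ((i 0 : ℝ) - (i' 0 : ℝ)) = 0 := by
      rw [hpre 0 (by decide)]; ring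
    have hr1 : (1:ℝ) ≤ (i 1 : ℝ) - (i' 1 : ℝ) := hrpos
    have Lead := mul_le_mul_of_nonneg_left hr1 hK2
    fin_cases j <;>
    · simp only [hD]; simp [hv, Matrix.vecHead, Matrix.vecTail]
      first
      | (rw [(key _).1] <;> linarith [Lead, e0, U2, L2, d3l, d3u, hk'])
      | (rw [(key _).2] <;> linarith [Lead, e0, U2, L2, d3l, d3u, hk'])
  · have e0 : (k:ℝ)^3 * ((i 0 : ℝ) - (i' 0 : ℝ)) = 0 := by
      rw [hpre 0 (by decide)]; ring
    have e1 : (k:ℝ)^2 * ((i 1 : ℝ) - (i' 1 : ℝ)) = 0 := by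
      rw [hpre 1 (by decide)]; ring
    have hr2 : (1:ℝ) ≤ (i 2 : ℝ) - (i' 2 : ℝ) := hrpos
    have Lead := mul_le_mul_of_nonneg_left hr2 hK0
    fin_cases j <;>
    · simp only [hD]; simp [hv, Matrix.vecHead, Matrix.vecTail]
      first
      | (rw [(key _).1] <;> linarith [Lead, e0, e1, d3l, d3u, hk'])
      | (rw [(key _).2] <;> linarith [Lead, e0, e1, d3l, d3u, hk'])
  · have e0 : (k:ℝ)^3 * ((i 0 : ℝ) - (i' 0 : ℝ)) = 0 := by
      rw [hpre 0 (by decide)]; ring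
    have e1 : (k:ℝ)^2 * ((i 1 : ℝ) - (i' 1 : ℝ)) = 0 := by
      rw [hpre 1 (by decide)]; ring
    have e2 : (k:ℝ) * ((i 2 : ℝ) - (i' 2 : ℝ)) = 0 := by
      rw [hpre 2 (by decide)]; ring
    have hr3 : (1:ℝ) ≤ (i 3 : ℝ) - (i' 3 : ℝ) := hrpos
    fin_cases j <;>
    · simp only [hD]; simp [hv, Matrix.vecHead, Matrix.vecTail]
      first
      | (rw [(key _).1] <;> linarith [hr3, e0, e1, e2, hk'])
      | (rw [(key _).2] <;> linarith [hr3, e0, e1, e2, hk'])
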